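/- Let q be an odd prime power, k = F_q, b ∈ k with b ∉ {0,1,−1}, a = b^2, t a transcendental, and E: Y^2 = X(X + 16b^2)(X + t^2) over k(u) where t = u^q − u. Then the point P with coordinates X(P) = 4bt(u^q + 4b)/u and Y(P) = 4bt(4b + t)(u^2 + 4bu)^{(q+1)/2}/u^2 lies on E(k(u)); in particular both coordinates are polynomials in u since u divides t = u^q − u. -/

import Mathlib

/-- Let `q` be an odd prime power, `k = F_q`, `b ∈ k` with `b ∉ {0, 1, −1}`, `t = u^q − u`,
and `E : Y² = X(X + 16b²)(X + t²)` over `k(u)`, i.e. the Weierstrass curve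
`Y² = X³ + (16b² + t²)X² + 16b²t²X`. Then the point `P` with coordinates
`X(P) = 4bt(u^q + 4b)/u` and `Y(P) = 4bt(4b + t)(u² + 4bu)^{(q+1)/2}/u²` lies on
`E(k(u))`; in particular both coordinates are polynomials in `u` (since `u` divides
`t = u^q − u`). -/
theorem stmt19 (q : ℕ) (hq : ∃ p m : ℕ, p.Prime ∧ q = p ^ m ∧ 0 < m) (hodd : Odd q)
    (k : Type) [Field k] [Fintype k] (hk : Fintype.card k = q)
    (b : k) (hb0 : b ≠ 0) (hb1 : b ≠ 1) (hbm : b ≠ -1) :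
    let u : RatFunc k := RatFunc.X
    let t : RatFunc k := u ^ q - u
    let B : RatFunc k := RatFunc.C b
    let W : WeierstrassCurve.Affine (RatFunc k) :=
      ⟨0, 16 * B ^ 2 + t ^ 2, 0, 16 * B ^ 2 * t ^ 2, 0⟩
    let Xc : RatFunc k := 4 * B * t * (u ^ q + 4 * B) / u
    let Yc : RatFunc k := 4 * B * t * (4 * B + t) * (u ^ 2 + 4 * B * u) ^ ((q + 1) / 2) / u ^ 2
    W.Equation Xc Yc ∧
    (∃ f g : Polynomial k,
      Xc = algebraMap (Polynomial k) (RatFunc k) f ∧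
      Yc = algebraMap (Polynomial k) (RatFunc k) g) := by
  intro u t B W Xc Yc
  obtain ⟨p, m, hp, hqpm, hm⟩ := hq
  haveI : Fact p.Prime := ⟨hp⟩
  obtain ⟨r, hr⟩ := hodd
  have hu : u ≠ 0 := RatFunc.X_ne_zero
  -- characteristic
  have hcharp : CharP k p := by
    obtain ⟨n, hrp, hcard⟩ := FiniteField.card k (ringChar k)
    have h1 : p ∣ ringChar k ^ (n : ℕ) := by
      rw [← hcard, hk, hqpm]; exact dvd_pow_self p hm.ne'
    have hdvd : p ∣ ringChar k := hp.dvd_of_dvd_pow h1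
    have : p = ringChar k := ((Nat.prime_dvd_prime_iff_eq hp hrp).mp hdvd)
    rw [this]; infer_instance
  haveI : CharP (RatFunc k) p := charP_of_injective_algebraMap' (A := RatFunc k) k p
  have frob : ∀ x y : RatFunc k, (x + y) ^ q = x ^ q + y ^ q := by
    intro x y; rw [hqpm]; exact add_pow_char_pow x y p m
  have h4B : (4 * B : RatFunc k) = RatFunc.C (4 * b) := by rw [map_mul, map_ofNat]
  have h4Bq : (4 * B : RatFunc k) ^ q = 4 * B := by
    rw [h4B, ← map_pow, ← hk, FiniteField.pow_card]
  have hfrob : (u ^ 2 + 4 * B * u) ^ q = (u ^ q) ^ 2 + 4 * B * u ^ q := by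
    rw [frob, ← pow_mul, mul_comm 2 q, pow_mul, mul_pow, h4Bq]
  have hhalf : (q + 1) / 2 = r + 1 := by omega
  have hYc2 : Yc ^ 2 = (4 * B * t * (4 * B + t)) ^ 2 *
      (((u ^ q) ^ 2 + 4 * B * u ^ q) * (u ^ 2 + 4 * B * u)) / u ^ 4 := by
    have h1 : Yc ^ 2 = (4 * B * t * (4 * B + t)) ^ 2 *
        ((u ^ 2 + 4 * B * u) ^ ((q + 1) / 2)) ^ 2 / u ^ 4 := by
      simp only [Yc]; ring
    rw [h1, ← pow_mul, Nat.div_mul_cancel (by omega : 2 ∣ q + 1), pow_succ (u ^ 2 + 4 * B * u) q, hfrob]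
  constructor
  · rw [WeierstrassCurve.Affine.equation_iff]
    show Yc ^ 2 + 0 * Xc * Yc + 0 * Yc =
        Xc ^ 3 + (16 * B ^ 2 + t ^ 2) * Xc ^ 2 + 16 * B ^ 2 * t ^ 2 * Xc + 0
    rw [hYc2]
    simp only [Xc, t]
    generalize u ^ q = v
    field_simp
    ring
  · refine ⟨Polynomial.C (4 * b) * (Polynomial.X ^ (2 * r) - 1) *
        (Polynomial.X ^ q + Polynomial.C (4 * b)),
      Polynomial.C (4 * b) * (Polynomial.X ^ (2 * r) - 1) *
        (Polynomial.C (4 * b) + (Polynomial.X ^ q - Polynomial.X)) *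
        Polynomial.X ^ r * (Polynomial.X + Polynomial.C (4 * b)) ^ (r + 1), ?_, ?_⟩
    · simp only [map_mul, map_sub, map_add, map_pow, map_one, map_ofNat, RatFunc.algebraMap_X,
        RatFunc.algebraMap_C, Xc, t, B]
      rw [div_eq_iff hu, hr]
      ring
    · simp only [map_mul, map_sub, map_add, map_pow, map_one, map_ofNat, RatFunc.algebraMap_X,
        RatFunc.algebraMap_C, Yc, t, B]
      rw [div_eq_iff (pow_ne_zero 2 hu), hhalf,
        (by ring : (u ^ 2 + 4 * B * u) = u * (u + 4 * B)), mul_pow, hr]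
      ring
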